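/- Let W be a Coxeter group with Coxeter system (W, {s_i}_{i∈B}). Let R₁, …, Rₙ be finitely many left cosets of standard parabolic subgroups of W (i.e., each R_k = w_k · W_{T_k} for some w_k ∈ W and T_k ⊆ B, where W_{T_k} is the subgroup generated by {s_i : i ∈ T_k}). If the R_k pairwise intersect, then ⋂_{k=1}^{n} R_k ≠ ∅. -/

import Mathlib

open scoped Pointwise Classical

namespace CoxeterHelly

open CoxeterSystem List

variable {B W : Type*} [Group W] {M : CoxeterMatrix B} (cs : CoxeterSystem M W)

def addAct (w : W) : (W → ZMod 2) ≃+ (W → ZMod 2) where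
  toFun f x := f (w⁻¹ * x * w)
  invFun f x := f (w * x * w⁻¹)
  left_inv f := by funext x; simp [mul_assoc]
  right_inv f := by funext x; simp [mul_assoc]
  map_add' f g := rfl

def phi (W : Type*) [Group W] : W →* MulAut (Multiplicative (W → ZMod 2)) where
  toFun w := AddEquiv.toMultiplicative (addAct w)
  map_one' := by
    apply MulEquiv.ext; intro f
    show Multiplicative.ofAdd (fun x => Multiplicative.toAdd f ((1:W)⁻¹ * x * 1)) = f
    simp
  map_mul' u v := by
    apply MulEquiv.ext; intro f
    show Multiplicative.ofAdd (fun x => Multiplicative.toAdd f ((u*v)⁻¹ * x * (u*v)))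
      = Multiplicative.ofAdd (fun x => Multiplicative.toAdd
          (Multiplicative.ofAdd fun y => Multiplicative.toAdd f (v⁻¹ * y * v)) (u⁻¹ * x * u))
    simp [mul_assoc]

lemma phi_apply_toAdd (w : W) (f : Multiplicative (W → ZMod 2)) (x : W) :
    Multiplicative.toAdd (phi W w f) x = Multiplicative.toAdd f (w⁻¹ * x * w) := rfl

noncomputable def sigma (i : B) : Multiplicative (W → ZMod 2) ⋊[phi W] W :=
  ⟨Multiplicative.ofAdd fun x => if x = cs.simple i then 1 else 0, cs.simple i⟩

def tseq (i j : B) (k : ℕ) : W := cs.simple i * (cs.simple j * cs.simple i) ^ k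

lemma tseq_succ (i j : B) (k : ℕ) :
    tseq cs i j (k + 1) = tseq cs i j k * (cs.simple j * cs.simple i) := by
  rw [tseq, tseq, pow_succ, ← mul_assoc]

lemma tseq_conj (i j : B) (k : ℕ) :
    (cs.simple i * cs.simple j) * tseq cs i j k * (cs.simple i * cs.simple j)⁻¹
      = tseq cs i j (k + 2) := by
  induction k with
  | zero =>
    simp [tseq, mul_inv_rev, mul_assoc, pow_succ, cs.simple_mul_simple_cancel_left]
  | succ k ih =>
    have hX : (cs.simple i * cs.simple j) * (cs.simple j * cs.simple i)
        * (cs.simple i * cs.simple j)⁻¹ = cs.simple j * cs.simple i := by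
      simp [mul_inv_rev, mul_assoc, cs.simple_mul_simple_cancel_left]
    calc (cs.simple i * cs.simple j) * tseq cs i j (k+1) * (cs.simple i * cs.simple j)⁻¹
        = ((cs.simple i * cs.simple j) * tseq cs i j k * (cs.simple i * cs.simple j)⁻¹)
          * ((cs.simple i * cs.simple j) * (cs.simple j * cs.simple i)
            * (cs.simple i * cs.simple j)⁻¹) := by
          rw [tseq_succ]; group
      _ = tseq cs i j (k + 2) * (cs.simple j * cs.simple i) := by rw [ih, hX]
      _ = tseq cs i j (k + 1 + 2) := by rw [← tseq_succ]

lemma tseq_periodic (i j : B) (k : ℕ) : tseq cs i j (k + M i j) = tseq cs i j k := by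
  rw [tseq, tseq, pow_add, cs.simple_mul_simple_pow', mul_one]


lemma ofAdd_mul_toAdd (f g : Multiplicative (W → ZMod 2)) (x : W) :
    Multiplicative.toAdd (f * g) x = Multiplicative.toAdd f x + Multiplicative.toAdd g x := rfl

lemma sigma_mul_pow (i j : B) (k : ℕ) :
    (sigma cs i * sigma cs j) ^ k =
      ⟨Multiplicative.ofAdd fun x =>
          ∑ r ∈ Finset.range (2 * k), if x = tseq cs i j r then (1 : ZMod 2) else 0,
        (cs.simple i * cs.simple j) ^ k⟩ := by
  induction k with
  | zero =>
    ext : 1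
    · apply Multiplicative.toAdd.injective
      funext x
      simp
    · simp
  | succ k ih =>
    rw [pow_succ', ih]
    ext : 1
    · apply Multiplicative.toAdd.injective
      funext x
      rw [SemidirectProduct.mul_left]
      rw [ofAdd_mul_toAdd]
      have h1 : Multiplicative.toAdd (sigma cs i * sigma cs j).left x
          = (if x = tseq cs i j 0 then (1 : ZMod 2) else 0)
            + (if x = tseq cs i j 1 then 1 else 0) := by
        rw [SemidirectProduct.mul_left, ofAdd_mul_toAdd]
        congr 1
        · show (if x = cs.simple i then (1:ZMod 2) else 0) = _
          congr 1
          simp [tseq]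
        · show (if (cs.simple i)⁻¹ * x * cs.simple i = cs.simple j then (1:ZMod 2) else 0) = _
          apply if_congr _ rfl rfl
          rw [cs.inv_simple]
          constructor
          · intro h
            have : x = cs.simple i * cs.simple j * cs.simple i := by
              rw [← h]
              simp [mul_assoc, cs.simple_mul_simple_cancel_left, cs.simple_mul_simple_self]
            rw [this, tseq]; simp [pow_succ, mul_assoc]
          · intro h
            rw [h, tseq]
            simp [pow_succ, mul_assoc, cs.simple_mul_simple_cancel_left]
      have h2 : Multiplicative.toAdd (phi W (sigma cs i * sigma cs j).right
            (Multiplicative.ofAdd fun x =>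
              ∑ r ∈ Finset.range (2 * k), if x = tseq cs i j r then (1 : ZMod 2) else 0)) x
          = ∑ r ∈ Finset.range (2 * k), if x = tseq cs i j (r + 2) then (1 : ZMod 2) else 0 := by
        rw [phi_apply_toAdd]
        show ∑ r ∈ Finset.range (2 * k), _ = _
        apply Finset.sum_congr rfl
        intro r _
        apply if_congr _ rfl rfl
        have hr : (sigma cs i * sigma cs j).right = cs.simple i * cs.simple j := rfl
        rw [hr]
        constructor
        · intro h
          have := congrArg (fun z => (cs.simple i * cs.simple j) * z
            * (cs.simple i * cs.simple j)⁻¹) h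
          rw [← tseq_conj cs i j r, ← this]
          group
        · intro h
          rw [h, ← tseq_conj cs i j r]
          group
      rw [h1, h2]
      show _ = ∑ r ∈ Finset.range (2 * (k+1)), if x = tseq cs i j r then (1:ZMod 2) else 0
      have h3 : 2 * (k + 1) = 2 * k + 1 + 1 := by ring
      rw [h3, Finset.sum_range_succ', Finset.sum_range_succ']
      simp only [add_assoc, Nat.reduceAdd, Nat.zero_add, zero_add]
      abel
    · show (sigma cs i * sigma cs j).right * _ = _
      show (cs.simple i * cs.simple j) * (cs.simple i * cs.simple j) ^ k = _
      rw [← pow_succ']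

lemma sigma_liftable : M.IsLiftable (sigma cs) := by
  intro i j
  rw [sigma_mul_pow]
  ext : 1
  · apply Multiplicative.toAdd.injective
    funext x
    show (∑ r ∈ Finset.range (2 * M i j), if x = tseq cs i j r then (1 : ZMod 2) else 0) = 0
    have h2 : 2 * M i j = M i j + M i j := by ring
    rw [h2, Finset.sum_range_add]
    have : ∀ r, (if x = tseq cs i j (M i j + r) then (1 : ZMod 2) else 0)
        = if x = tseq cs i j r then 1 else 0 := by
      intro r
      rw [Nat.add_comm, tseq_periodic]
    simp only [this]
    rw [← two_nsmul]
    have : (2 : ℕ) • (∑ r ∈ Finset.range (M i j), if x = tseq cs i j r then (1 : ZMod 2) else 0)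
        = 2 * ∑ r ∈ Finset.range (M i j), if x = tseq cs i j r then (1 : ZMod 2) else 0 := by
      simp [nsmul_eq_mul]
    rw [this]
    have h0 : (2 : ZMod 2) = 0 := rfl
    rw [h0, zero_mul]
  · show (cs.simple i * cs.simple j) ^ M i j = 1
    exact cs.simple_mul_simple_pow i j



/-- The parity homomorphism. -/
noncomputable def F : W →* Multiplicative (W → ZMod 2) ⋊[phi W] W :=
  cs.lift ⟨sigma cs, sigma_liftable cs⟩

lemma F_simple (i : B) : F cs (cs.simple i) = sigma cs i :=
  cs.lift_apply_simple (sigma_liftable cs) i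

lemma F_right (w : W) : (F cs w).right = w := by
  have : SemidirectProduct.rightHom.comp (F cs) = MonoidHom.id W := by
    apply cs.ext_simple
    intro i
    simp [F_simple]
    rfl
  calc (F cs w).right = (SemidirectProduct.rightHom.comp (F cs)) w := rfl
    _ = w := by rw [this]; rfl

/-- The parity cocycle. -/
noncomputable def eta (w : W) : W → ZMod 2 := Multiplicative.toAdd (F cs w).left

lemma eta_mul (u v x : W) : eta cs (u * v) x = eta cs u x + eta cs v (u⁻¹ * x * u) := by
  unfold eta
  rw [map_mul, SemidirectProduct.mul_left, ofAdd_mul_toAdd, F_right]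
  rfl

lemma eta_simple (i : B) (x : W) :
    eta cs (cs.simple i) x = if x = cs.simple i then 1 else 0 := by
  unfold eta
  rw [F_simple]
  rfl

lemma eta_wordProd_count (ω : List B) (x : W) :
    eta cs (cs.wordProd ω) x = ((cs.leftInvSeq ω).count x : ZMod 2) := by
  induction ω generalizing x with
  | nil =>
    simp only [wordProd_nil, leftInvSeq_nil, List.count_nil, Nat.cast_zero]
    unfold eta
    rw [map_one]
    rfl
  | cons i ω ih =>
    rw [cs.wordProd_cons, eta_mul, eta_simple, cs.inv_simple]
    show _ = ((List.count x (cs.simple i :: List.map (MulAut.conj (cs.simple i))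
      (cs.leftInvSeq ω)) : ℕ) : ZMod 2)
    rw [List.count_cons]
    have hinj : Function.Injective (MulAut.conj (cs.simple i) : W → W) :=
      (MulAut.conj (cs.simple i)).injective
    have hx : x = MulAut.conj (cs.simple i) (cs.simple i * x * cs.simple i) := by
      simp [MulAut.conj_apply, mul_assoc, cs.simple_mul_simple_cancel_left,
        cs.simple_mul_simple_self]
    have hcount : List.count x (List.map (MulAut.conj (cs.simple i)) (cs.leftInvSeq ω))
        = List.count (cs.simple i * x * cs.simple i) (cs.leftInvSeq ω) := by
      conv_lhs => rw [hx]
      exact List.count_map_of_injective _ _ hinj _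
    rw [Nat.cast_add, hcount, ← ih, add_comm]
    congr 1
    have hbeq : (cs.simple i == x) = true ↔ x = cs.simple i := by
      rw [beq_iff_eq, eq_comm]
    by_cases h : x = cs.simple i
    · rw [if_pos h, if_pos (hbeq.mpr h)]; simp
    · rw [if_neg h, if_neg (fun hc => h (hbeq.mp hc))]; simp



lemma simple_mem_leftInvSeq_of_descent (ω : List B) (hω : cs.IsReduced ω) (i : B)
    (h : cs.length (cs.simple i * cs.wordProd ω) < cs.length (cs.wordProd ω)) :
    cs.simple i ∈ cs.leftInvSeq ω := by
  obtain ⟨ω₁, hred, heq⟩ := cs.exists_reduced_word' (cs.simple i * cs.wordProd ω)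
  have hprod : cs.wordProd (i :: ω₁) = cs.wordProd ω := by
    rw [cs.wordProd_cons, ← heq, cs.simple_mul_simple_cancel_left]
  have hred₀ : cs.IsReduced (i :: ω₁) := by
    show cs.length (cs.wordProd (i :: ω₁)) = (i :: ω₁).length
    rw [hprod]
    have h1 : cs.length (cs.simple i * cs.wordProd ω) + 1 = cs.length (cs.wordProd ω) := by
      rcases cs.length_simple_mul (cs.wordProd ω) i with h' | h' <;> omega
    have h2 : cs.length (cs.wordProd ω₁) = ω₁.length := hred
    rw [← heq] at h2
    show _ = ω₁.length + 1
    omega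
  have hpar : ((cs.leftInvSeq ω).count (cs.simple i) : ZMod 2)
      = ((cs.leftInvSeq (i :: ω₁)).count (cs.simple i) : ZMod 2) := by
    rw [← eta_wordProd_count, ← eta_wordProd_count, hprod]
  have hmem₀ : cs.simple i ∈ cs.leftInvSeq (i :: ω₁) := by
    show cs.simple i ∈ cs.simple i :: List.map (MulAut.conj (cs.simple i)) (cs.leftInvSeq ω₁)
    exact List.mem_cons_self
  have hcount₀ : (cs.leftInvSeq (i :: ω₁)).count (cs.simple i) = 1 :=
    List.count_eq_one_of_mem hred₀.nodup_leftInvSeq hmem₀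
  rw [hcount₀] at hpar
  by_contra hmem
  rw [List.count_eq_zero_of_not_mem hmem] at hpar
  simp at hpar

lemma exists_eraseIdx_of_rightDescent (ω : List B) (hω : cs.IsReduced ω) (i : B)
    (h : cs.length (cs.wordProd ω * cs.simple i) < cs.length (cs.wordProd ω)) :
    ∃ j, j < ω.length ∧ cs.wordProd ω * cs.simple i = cs.wordProd (ω.eraseIdx j) := by
  have hrev : cs.IsReduced ω.reverse := (cs.isReduced_reverse_iff ω).mpr hω
  have h' : cs.length (cs.simple i * cs.wordProd ω.reverse)
      < cs.length (cs.wordProd ω.reverse) := by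
    rw [cs.wordProd_reverse]
    have e : cs.simple i * (cs.wordProd ω)⁻¹ = (cs.wordProd ω * cs.simple i)⁻¹ := by
      rw [mul_inv_rev, cs.inv_simple]
    rw [e, cs.length_inv, cs.length_inv]
    exact h
  have hm := simple_mem_leftInvSeq_of_descent cs ω.reverse hrev i h'
  rw [cs.leftInvSeq_reverse, List.mem_reverse] at hm
  obtain ⟨j, hj, hget⟩ := List.mem_iff_getElem.mp hm
  have hj' : j < ω.length := by
    rw [cs.length_rightInvSeq] at hj; exact hj
  refine ⟨j, hj', ?_⟩
  rw [← cs.wordProd_mul_getD_rightInvSeq ω j]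
  congr 1
  rw [List.getD_eq_getElem _ 1 hj, hget]



lemma exists_reduced_subword (n : ℕ) : ∀ ω : List B, ω.length ≤ n →
    ∃ ω' : List B, cs.IsReduced ω' ∧ cs.wordProd ω' = cs.wordProd ω ∧ ∀ i ∈ ω', i ∈ ω := by
  induction n with
  | zero =>
    intro ω hlen
    have : ω = [] := List.length_eq_zero_iff.mp (Nat.le_zero.mp hlen)
    subst this
    exact ⟨[], by simp [CoxeterSystem.IsReduced], rfl, by simp⟩
  | succ n ih =>
    intro ω hlen
    by_cases hred : cs.IsReduced ω
    · exact ⟨ω, hred, rfl, fun i h => h⟩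
    have hne : ω ≠ [] := by
      rintro rfl
      exact hred (by simp [CoxeterSystem.IsReduced])
    obtain ⟨ω'', i, hsplit⟩ : ∃ ω'' i, ω = ω'' ++ [i] :=
      ⟨ω.dropLast, ω.getLast hne, (List.dropLast_append_getLast hne).symm⟩
    subst hsplit
    have hlen'' : ω''.length ≤ n := by
      have := hlen; simp at this; omega
    have hprod : cs.wordProd (ω'' ++ [i]) = cs.wordProd ω'' * cs.simple i := by
      rw [cs.wordProd_append, cs.wordProd_singleton]
    by_cases hred'' : cs.IsReduced ω''
    · have hlt : cs.length (cs.wordProd ω'' * cs.simple i) < cs.length (cs.wordProd ω'') := by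
        rcases cs.length_mul_simple (cs.wordProd ω'') i with h' | h'
        · exfalso
          apply hred
          show cs.length (cs.wordProd (ω'' ++ [i])) = (ω'' ++ [i]).length
          rw [hprod, h', hred'']
          simp
        · omega
      obtain ⟨j, hj, hdel⟩ := exists_eraseIdx_of_rightDescent cs ω'' hred'' i hlt
      obtain ⟨ω', h1, h2, h3⟩ := ih (ω''.eraseIdx j) (by
        have := List.length_eraseIdx_add_one hj; omega)
      refine ⟨ω', h1, ?_, ?_⟩
      · rw [h2, ← hdel, hprod]
      · intro x hx
        have hx' := h3 x hx
        have : x ∈ ω'' := (List.eraseIdx_sublist ω'' j).subset hx'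
        exact List.mem_append_left _ this
    · obtain ⟨ρ, hρ1, hρ2, hρ3⟩ := ih ω'' hlen''
      have hρlen : ρ.length < ω''.length := by
        have h1 : cs.length (cs.wordProd ρ) = ρ.length := hρ1
        have h2 : cs.length (cs.wordProd ω'') ≤ ω''.length := cs.length_wordProd_le ω''
        have h3 : cs.length (cs.wordProd ω'') ≠ ω''.length := hred''
        rw [hρ2] at h1
        omega
      obtain ⟨ω', h1, h2, h3⟩ := ih (ρ ++ [i]) (by simp; omega)
      refine ⟨ω', h1, ?_, ?_⟩
      · rw [h2, cs.wordProd_append, cs.wordProd_singleton, hρ2, ← hprod]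
      · intro x hx
        rcases List.mem_append.mp (h3 x hx) with hxρ | hxi
        · exact List.mem_append_left _ (hρ3 x hxρ)
        · exact List.mem_append_right _ hxi

lemma wordProd_mem_closure (T : Set B) (ω : List B) (h : ∀ i ∈ ω, i ∈ T) :
    cs.wordProd ω ∈ Subgroup.closure (cs.simple '' T) := by
  induction ω with
  | nil =>
    rw [cs.wordProd_nil]
    exact one_mem _
  | cons i ω ih =>
    rw [cs.wordProd_cons]
    exact mul_mem (Subgroup.subset_closure ⟨i, h i List.mem_cons_self, rfl⟩)
      (ih fun x hx => h x (List.mem_cons_of_mem i hx))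

lemma exists_word_over (T : Set B) (u : W) (hu : u ∈ Subgroup.closure (cs.simple '' T)) :
    ∃ ω : List B, (∀ i ∈ ω, i ∈ T) ∧ cs.wordProd ω = u := by
  induction hu using Subgroup.closure_induction with
  | mem x hx =>
    obtain ⟨i, hi, rfl⟩ := hx
    exact ⟨[i], by simpa using hi, cs.wordProd_singleton i⟩
  | one => exact ⟨[], by simp, cs.wordProd_nil⟩
  | mul x y _ _ hx hy =>
    obtain ⟨ω₁, hm₁, hp₁⟩ := hx
    obtain ⟨ω₂, hm₂, hp₂⟩ := hy
    exact ⟨ω₁ ++ ω₂, fun i hi => (List.mem_append.mp hi).elim (hm₁ i) (hm₂ i),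
      by rw [cs.wordProd_append, hp₁, hp₂]⟩
  | inv x _ hx =>
    obtain ⟨ω₁, hm₁, hp₁⟩ := hx
    exact ⟨ω₁.reverse, fun i hi => hm₁ i (List.mem_reverse.mp hi),
      by rw [cs.wordProd_reverse, hp₁]⟩

lemma exists_reduced_word_over (T : Set B) (u : W)
    (hu : u ∈ Subgroup.closure (cs.simple '' T)) :
    ∃ ω : List B, (∀ i ∈ ω, i ∈ T) ∧ cs.wordProd ω = u ∧ cs.IsReduced ω := by
  obtain ⟨ω, hm, hp⟩ := exists_word_over cs T u hu
  obtain ⟨ω', h1, h2, h3⟩ := exists_reduced_subword cs ω.length ω le_rfl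
  exact ⟨ω', fun i hi => hm i (h3 i hi), by rw [h2, hp], h1⟩

lemma exists_rightDescent_in (T : Set B) (u : W)
    (hu : u ∈ Subgroup.closure (cs.simple '' T)) (hne : u ≠ 1) :
    ∃ i ∈ T, cs.length (u * cs.simple i) + 1 = cs.length u := by
  obtain ⟨ω, hm, hp, hred⟩ := exists_reduced_word_over cs T u hu
  have hωne : ω ≠ [] := by
    rintro rfl
    exact hne (by rw [← hp, cs.wordProd_nil])
  refine ⟨ω.getLast hωne, hm _ (List.getLast_mem hωne), ?_⟩
  have hsplit : ω.dropLast ++ [ω.getLast hωne] = ω := List.dropLast_append_getLast hωne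
  have hu' : u * cs.simple (ω.getLast hωne) = cs.wordProd ω.dropLast := by
    have hω : cs.wordProd ω = cs.wordProd ω.dropLast * cs.simple (ω.getLast hωne) := by
      conv_lhs => rw [← hsplit]
      rw [cs.wordProd_append, cs.wordProd_singleton]
    rw [← hp, hω, cs.simple_mul_simple_cancel_right]
  have h1 : cs.length (cs.wordProd ω.dropLast) ≤ ω.dropLast.length :=
    cs.length_wordProd_le _
  have h2 : cs.length u = ω.length := by rw [← hp]; exact hred
  have h3 : ω.dropLast.length = ω.length - 1 := List.length_dropLast
  have h4 : 1 ≤ ω.length := List.length_pos_iff.mpr hωne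
  rcases cs.length_mul_simple u (ω.getLast hωne) with h' | h'
  · exfalso
    rw [hu'] at h'
    omega
  · omega



lemma length_mul_of_minimal (T : Set B) (m : W)
    (hmin : ∀ t ∈ Subgroup.closure (cs.simple '' T), cs.length m ≤ cs.length (m * t)) :
    ∀ u ∈ Subgroup.closure (cs.simple '' T), cs.length (m * u) = cs.length m + cs.length u := by
  suffices h : ∀ n : ℕ, ∀ u ∈ Subgroup.closure (cs.simple '' T), cs.length u ≤ n →
      cs.length (m * u) = cs.length m + cs.length u by
    intro u hu
    exact h (cs.length u) u hu le_rfl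
  intro n
  induction n with
  | zero =>
    intro u _ hlen
    have : u = 1 := cs.length_eq_zero_iff.mp (Nat.le_zero.mp hlen)
    subst this
    simp
  | succ n ih =>
    intro u hu hlen
    by_cases hone : u = 1
    · subst hone; simp
    obtain ⟨i, hiT, hdesc⟩ := exists_rightDescent_in cs T u hu hone
    set u' := u * cs.simple i with hu'def
    have hsi : cs.simple i ∈ Subgroup.closure (cs.simple '' T) :=
      Subgroup.subset_closure ⟨i, hiT, rfl⟩
    have hu'mem : u' ∈ Subgroup.closure (cs.simple '' T) := mul_mem hu hsi
    have hu'len : cs.length u' + 1 = cs.length u := hdesc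
    have hIH : cs.length (m * u') = cs.length m + cs.length u' :=
      ih u' hu'mem (by omega)
    have huu' : u = u' * cs.simple i := by
      rw [hu'def, cs.simple_mul_simple_cancel_right]
    -- main claim : length goes up when multiplying m * u' by s i
    have hclaim : cs.length (m * u' * cs.simple i) = cs.length (m * u') + 1 := by
      rcases cs.length_mul_simple (m * u') i with h' | h'
      · exact h'
      · exfalso
        -- exchange in the concatenated reduced word
        obtain ⟨ωm, hωm_red, hωm_prod⟩ := cs.exists_reduced_word' m
        obtain ⟨ωu, hωu_T, hωu_prod, hωu_red⟩ := exists_reduced_word_over cs T u' hu'mem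
        have hprod : cs.wordProd (ωm ++ ωu) = m * u' := by
          rw [cs.wordProd_append, ← hωm_prod, hωu_prod]
        have hredcat : cs.IsReduced (ωm ++ ωu) := by
          show cs.length (cs.wordProd (ωm ++ ωu)) = (ωm ++ ωu).length
          rw [hprod, hIH, List.length_append]
          have e1 : cs.length m = ωm.length := by rw [hωm_prod]; exact hωm_red
          have e2 : cs.length u' = ωu.length := by rw [← hωu_prod]; exact hωu_red
          omega
        have hlt : cs.length (cs.wordProd (ωm ++ ωu) * cs.simple i)
            < cs.length (cs.wordProd (ωm ++ ωu)) := by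
          rw [hprod]; omega
        obtain ⟨j, hj, hdel⟩ := exists_eraseIdx_of_rightDescent cs (ωm ++ ωu) hredcat i hlt
        rw [hprod] at hdel
        by_cases hjm : j < ωm.length
        · -- contradiction with minimality of m
          rw [List.eraseIdx_append_of_lt_length hjm, cs.wordProd_append, hωu_prod] at hdel
          have hteq : m * (u' * cs.simple i * u'⁻¹) = cs.wordProd (ωm.eraseIdx j) := by
            calc m * (u' * cs.simple i * u'⁻¹)
                = (m * u' * cs.simple i) * u'⁻¹ := by group
              _ = cs.wordProd (ωm.eraseIdx j) * u' * u'⁻¹ := by rw [hdel]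
              _ = cs.wordProd (ωm.eraseIdx j) := by group
          have htmem : u' * cs.simple i * u'⁻¹ ∈ Subgroup.closure (cs.simple '' T) :=
            mul_mem (mul_mem hu'mem hsi) (inv_mem hu'mem)
          have hmin' := hmin _ htmem
          rw [hteq] at hmin'
          have hle : cs.length (cs.wordProd (ωm.eraseIdx j)) ≤ (ωm.eraseIdx j).length :=
            cs.length_wordProd_le _
          have hlen1 : (ωm.eraseIdx j).length + 1 = ωm.length :=
            List.length_eraseIdx_add_one hjm
          have e1 : cs.length m = ωm.length := by rw [hωm_prod]; exact hωm_red
          omega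
        · -- contradiction with the length of u
          have hjm' : ωm.length ≤ j := Nat.le_of_not_lt hjm
          rw [List.eraseIdx_append_of_length_le hjm', cs.wordProd_append] at hdel
          have hueq : u = cs.wordProd (ωu.eraseIdx (j - ωm.length)) := by
            calc u = m⁻¹ * (m * u' * cs.simple i) := by rw [huu']; group
              _ = m⁻¹ * (cs.wordProd ωm * cs.wordProd (ωu.eraseIdx (j - ωm.length))) := by
                  rw [hdel]
              _ = cs.wordProd (ωu.eraseIdx (j - ωm.length)) := by rw [← hωm_prod]; group
          have hule : cs.length u ≤ (ωu.eraseIdx (j - ωm.length)).length := by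
            rw [hueq]; exact cs.length_wordProd_le _
          have hj2 : j - ωm.length < ωu.length := by
            rw [List.length_append] at hj; omega
          have hlen2 : (ωu.eraseIdx (j - ωm.length)).length + 1 = ωu.length :=
            List.length_eraseIdx_add_one hj2
          have e2 : cs.length u' = ωu.length := by rw [← hωu_prod]; exact hωu_red
          omega
    calc cs.length (m * u) = cs.length (m * u' * cs.simple i) := by rw [huu', ← mul_assoc]
      _ = cs.length m + cs.length u' + 1 := by rw [hclaim, hIH]
      _ = cs.length m + cs.length u := by omega



/-- A subset of `W` is gated with respect to the word metric. -/
def Gated (X : Set W) : Prop :=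
  ∀ a : W, ∃ g ∈ X, ∀ x ∈ X,
    cs.length (a⁻¹ * x) = cs.length (a⁻¹ * g) + cs.length (g⁻¹ * x)

lemma len_symm (u v : W) : cs.length (u⁻¹ * v) = cs.length (v⁻¹ * u) := by
  rw [← cs.length_inv]
  congr 1
  group

lemma len_triangle (a g x : W) :
    cs.length (a⁻¹ * x) ≤ cs.length (a⁻¹ * g) + cs.length (g⁻¹ * x) := by
  have : a⁻¹ * x = (a⁻¹ * g) * (g⁻¹ * x) := by group
  rw [this]
  exact cs.length_mul_le _ _

lemma gated_convex {X : Set W} (hX : Gated cs X) {a x z : W} (ha : a ∈ X) (hx : x ∈ X)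
    (h : cs.length (a⁻¹ * z) + cs.length (z⁻¹ * x) = cs.length (a⁻¹ * x)) : z ∈ X := by
  obtain ⟨g, hg, hgate⟩ := hX z
  have h1 := hgate a ha
  have h2 := hgate x hx
  have htri := len_triangle cs a g x
  have e1 : cs.length (a⁻¹ * z) = cs.length (z⁻¹ * g) + cs.length (g⁻¹ * a) := by
    rw [len_symm cs a z]; exact h1
  have e2 : cs.length (g⁻¹ * a) = cs.length (a⁻¹ * g) := len_symm cs g a
  have hzg : cs.length (z⁻¹ * g) = 0 := by omega
  have : z⁻¹ * g = 1 := cs.length_eq_zero_iff.mp hzg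
  have : z = g := by
    rw [← mul_one z, ← this]; group
  rw [this]; exact hg

lemma gated_inter {X Y : Set W} (hX : Gated cs X) (hY : Gated cs Y)
    (hne : (X ∩ Y).Nonempty) : Gated cs (X ∩ Y) := by
  intro z
  obtain ⟨a, ha, hga⟩ := hX z
  obtain ⟨g, hg, hgg⟩ := hY a
  obtain ⟨c, hcX, hcY⟩ := hne
  have hgX : g ∈ X := gated_convex cs hX ha hcX (by rw [← hgg c hcY])
  refine ⟨g, ⟨hgX, hg⟩, ?_⟩
  intro x hx
  have e1 := hga x hx.1
  have e2 := hgg x hx.2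
  have e3 := hga g hgX
  rw [e1, e2, e3]
  omega

lemma helly3 {A C D : Set W} (hA : Gated cs A) (hC : Gated cs C) (hD : Gated cs D)
    (hAC : (A ∩ C).Nonempty) (hAD : (A ∩ D).Nonempty) (hCD : (C ∩ D).Nonempty) :
    (A ∩ C ∩ D).Nonempty := by
  obtain ⟨a, haC, haD⟩ := hCD
  obtain ⟨g, hgA, hgate⟩ := hA a
  obtain ⟨x, hxA, hxC⟩ := hAC
  obtain ⟨y, hyA, hyD⟩ := hAD
  have hgC : g ∈ C := gated_convex cs hC haC hxC (by rw [← hgate x hxA])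
  have hgD : g ∈ D := gated_convex cs hD haD hyD (by rw [← hgate y hyA])
  exact ⟨g, ⟨hgA, hgC⟩, hgD⟩

lemma gated_helly (n : ℕ) (X : Fin n → Set W) (hg : ∀ k, Gated cs (X k))
    (hpair : ∀ k l, (X k ∩ X l).Nonempty) : (⋂ k, X k).Nonempty := by
  induction n with
  | zero => exact ⟨1, Set.mem_iInter.2 fun k => k.elim0⟩
  | succ n ih =>
    rcases Nat.eq_zero_or_pos n with hn | hn
    · subst hn
      obtain ⟨z, hz, _⟩ := hpair 0 0
      exact ⟨z, Set.mem_iInter.2 fun k => by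
        have : k = 0 := Fin.ext (by omega)
        rw [this]; exact hz⟩
    · set Y : Fin n → Set W := fun k => X k.castSucc ∩ X (Fin.last n) with hY
      have hgY : ∀ k, Gated cs (Y k) := fun k =>
        gated_inter cs (hg _) (hg _) (hpair _ _)
      have hpairY : ∀ k l, (Y k ∩ Y l).Nonempty := by
        intro k l
        obtain ⟨z, hz⟩ := helly3 cs (hg k.castSucc) (hg l.castSucc) (hg (Fin.last n))
          (hpair _ _) (hpair _ _) (hpair _ _)
        exact ⟨z, ⟨⟨hz.1.1, hz.2⟩, ⟨hz.1.2, hz.2⟩⟩⟩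
      obtain ⟨z, hz⟩ := ih Y hgY hpairY
      rw [Set.mem_iInter] at hz
      refine ⟨z, Set.mem_iInter.2 ?_⟩
      intro k
      induction k using Fin.lastCases with
      | last => exact (hz ⟨0, hn⟩).2
      | cast q => exact (hz q).1

lemma gated_coset (w : W) (T : Set B) :
    Gated cs (w • (Subgroup.closure (cs.simple '' T) : Set W)) := by
  intro a
  have hex : ∃ nt : ℕ, ∃ t ∈ Subgroup.closure (cs.simple '' T),
      cs.length (a⁻¹ * w * t) = nt :=
    ⟨cs.length (a⁻¹ * w), 1, one_mem _, by rw [mul_one]⟩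
  obtain ⟨t₀, ht₀, hlen₀⟩ := Nat.find_spec hex
  set m := a⁻¹ * w * t₀ with hm
  have hmin : ∀ t ∈ Subgroup.closure (cs.simple '' T), cs.length m ≤ cs.length (m * t) := by
    intro t ht
    have hmem : ∃ t' ∈ Subgroup.closure (cs.simple '' T),
        cs.length (a⁻¹ * w * t') = cs.length (m * t) :=
      ⟨t₀ * t, mul_mem ht₀ ht, by rw [hm]; group⟩
    obtain ⟨t', ht', hlt'⟩ := hmem
    have := Nat.find_min' hex ⟨t', ht', hlt'⟩
    omega
  refine ⟨w * t₀, Set.mem_smul_set.2 ⟨t₀, ht₀, rfl⟩, ?_⟩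
  intro x hx
  obtain ⟨t, ht, rfl⟩ := Set.mem_smul_set.1 hx
  have e1 : a⁻¹ * (w • t) = m * (t₀⁻¹ * t) := by rw [hm, smul_eq_mul]; group
  have e2 : a⁻¹ * (w * t₀) = m := by rw [hm]; group
  have e3 : (w * t₀)⁻¹ * (w • t) = t₀⁻¹ * t := by rw [smul_eq_mul]; group
  rw [e1, e2, e3]
  exact length_mul_of_minimal cs T m hmin (t₀⁻¹ * t) (mul_mem (inv_mem ht₀) ht)

end CoxeterHelly



open scoped Pointwise
/-- **Helly property for cosets of standard parabolic subgroups of a Coxeter group.**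
Let `(W, {sᵢ}_{i ∈ B})` be a Coxeter system with `B` finite, and let
`R_k = w_k • W_{T_k}` (`k = 1, …, n`) be finitely many left cosets of standard parabolic
subgroups. If the `R_k` pairwise intersect, then their total intersection is nonempty. -/
theorem coxeter_parabolic_cosets_helly {B W : Type*} [Finite B] [Group W]
    (M : CoxeterMatrix B) (cs : CoxeterSystem M W)
    (n : ℕ) (w : Fin n → W) (T : Fin n → Set B)
    (hpair : ∀ i j : Fin n,
      ((w i • (Subgroup.closure (cs.simple '' T i) : Set W)) ∩
        (w j • (Subgroup.closure (cs.simple '' T j) : Set W))).Nonempty) :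
    (⋂ i : Fin n, w i • (Subgroup.closure (cs.simple '' T i) : Set W)).Nonempty := by
  exact CoxeterHelly.gated_helly cs n
    (fun i => w i • (Subgroup.closure (cs.simple '' T i) : Set W))
    (fun i => CoxeterHelly.gated_coset cs (w i) (T i)) hpair
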